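/- Every prime number p belongs to the multiplicative subgroup G of the positive rationals generated by {f(x, y) : x, y positive integers}, where f(x, y) = (x+1)(y+1)/(x+y+1). In particular, 2 = f(2, 3) ∈ G, and for every odd prime p = 2x+1 one has p = (x+1)²/f(x, x). -/

import Mathlib

/-- The multiplicative group of positive rational numbers. -/
abbrev Qpos := {q : ℚ // 0 < q}

/-- `f x y = (x+1)(y+1)/(x+y+1)`. -/
def f (x y : ℕ) : ℚ := ((x + 1 : ℚ) * (y + 1)) / (x + y + 1)

/-- `G` is the subgroup of the positive rationals generated by
`{f x y : x, y positive integers}`. -/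
def G : Subgroup Qpos :=
  Subgroup.closure {g : Qpos | ∃ x y : ℕ, 0 < x ∧ 0 < y ∧ (g : ℚ) = f x y}

lemma f_pos (x y : ℕ) : 0 < f x y := by
  unfold f; positivity

lemma nat_mem : ∀ n : ℕ, 0 < n → ∀ h : (0:ℚ) < (n:ℚ), (⟨(n:ℚ), h⟩ : Qpos) ∈ G := by
  intro n
  induction n using Nat.strong_induction_on with
  | _ n IH =>
    intro hn h
    rcases eq_or_lt_of_le (show 1 ≤ n from hn) with h1 | h1
    · have : (⟨(n:ℚ), h⟩ : Qpos) = 1 := by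
        apply Subtype.ext
        have : n = 1 := by omega
        simp [this]
      rw [this]; exact one_mem G
    by_cases hp : n.Prime
    · by_cases h2 : n = 2
      · subst h2
        apply Subgroup.subset_closure
        exact ⟨2, 3, by norm_num, by norm_num, by norm_num [f]⟩
      · have hodd : Odd n := hp.odd_of_ne_two h2
        obtain ⟨k, hk⟩ := hodd
        have hk1 : 0 < k := by omega
        have hg : (⟨f k k, f_pos k k⟩ : Qpos) ∈ G :=
          Subgroup.subset_closure ⟨k, k, hk1, hk1, rfl⟩
        have hka : 0 < ((k:ℚ)+1) := by positivity
        have hmem : (⟨((k:ℚ)+1), hka⟩ : Qpos) ∈ G := by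
          have := IH (k+1) (by omega) (by omega) (by push_cast; positivity)
          convert this using 2 <;> push_cast <;> ring
        have key : (⟨(n:ℚ), h⟩ : Qpos)
            = (⟨((k:ℚ)+1), hka⟩ : Qpos)^2 * (⟨f k k, f_pos k k⟩ : Qpos)⁻¹ := by
          apply Subtype.ext
          push_cast [hk]
          show (2*(k:ℚ)+1) = ((k:ℚ)+1)^2 * (f k k)⁻¹
          have hd : ((k:ℚ) + k + 1) ≠ 0 := by positivity
          have hnum : ((k:ℚ)+1) ≠ 0 := by positivity
          rw [f]
          field_simp
          ring
        rw [key]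
        exact mul_mem (pow_mem hmem 2) (inv_mem hg)
    · obtain ⟨m, hmd, hm2, hmlt⟩ := Nat.exists_dvd_of_not_prime2 (by omega) hp
      obtain ⟨b, hb⟩ := hmd
      have hb1 : 0 < b := by
        rcases Nat.eq_zero_or_pos b with h0 | h0
        · subst h0; simp at hb; omega
        · exact h0
      have hblt : b < n := by
        calc b < 2*b := by omega
        _ ≤ m*b := Nat.mul_le_mul_right b hm2
        _ = n := hb.symm
      have hm0 : (0:ℚ) < (m:ℚ) := by exact_mod_cast (by omega : 0 < m)
      have hb0 : (0:ℚ) < (b:ℚ) := by exact_mod_cast hb1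
      have key : (⟨(n:ℚ), h⟩ : Qpos) = (⟨(m:ℚ), hm0⟩ : Qpos) * (⟨(b:ℚ), hb0⟩ : Qpos) := by
        apply Subtype.ext
        show (n:ℚ) = (m:ℚ) * (b:ℚ)
        exact_mod_cast congrArg (Nat.cast : ℕ → ℚ) hb
      rw [key]
      exact mul_mem (IH m hmlt (by omega) hm0) (IH b hblt hb1 hb0)

/-- Every prime `p` belongs to `G`; in particular `2 = f 2 3 ∈ G`, and for every
odd prime `p = 2x+1` one has `p = (x+1)²/f(x,x)`. -/
theorem stmt_13 :
    (∀ (p : ℕ) (hp : p.Prime),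
      (⟨(p : ℚ), by exact_mod_cast hp.pos⟩ : Qpos) ∈ G) ∧
    f 2 3 = 2 ∧
    (∀ x : ℕ, 0 < x → (2 * x + 1).Prime →
      ((2 * x + 1 : ℕ) : ℚ) = ((x : ℚ) + 1) ^ 2 / f x x) := by
  refine ⟨fun p hp => nat_mem p hp.pos (by exact_mod_cast hp.pos), by norm_num [f], ?_⟩
  intro x hx _
  have hd : ((x:ℚ) + x + 1) ≠ 0 := by positivity
  have hnum : ((x:ℚ)+1) ≠ 0 := by positivity
  rw [f]; push_cast; field_simp; ring
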